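/- Generalized Matrix Determinant Lemma: Let H be an n×n real matrix and u₁,…,u_k, v₁,…,v_k be column vectors in ℝⁿ. Define Δ₀ = 0 and Δᵢ = ∑_{j=1}^{i} uⱼ vⱼᵀ for i ≥ 1. Then det(H + Δ_k) = det(H) + ∑_{i=1}^{k} vᵢᵀ · adj(H + Δ_{i-1}) · uᵢ. -/

import Mathlib

open Matrix Polynomial

lemma det_add_vecMulVec_of_isUnit {n : ℕ} {A : Matrix (Fin n) (Fin n) ℝ}
    (hA : IsUnit A.det) (u v : Fin n → ℝ) :
    (A + Matrix.vecMulVec u v).det = A.det + v ⬝ᵥ (A.adjugate *ᵥ u) := by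
  have hadj : A.adjugate = A.det • A⁻¹ := by
    rw [Matrix.nonsing_inv_apply _ hA, smul_smul, IsUnit.mul_val_inv, one_smul]
  rw [Matrix.vecMulVec_eq Unit, Matrix.det_add_replicateCol_mul_replicateRow hA,
    Matrix.det_unique (1 + replicateRow Unit v * A⁻¹ * replicateCol Unit u), hadj]
  simp only [Matrix.add_apply, Matrix.one_apply_eq, Matrix.mul_apply, Matrix.replicateRow_apply,
    Matrix.replicateCol_apply, dotProduct, Matrix.mulVec, Matrix.smul_apply, smul_eq_mul,
    Finset.mul_sum, Finset.sum_mul, Finset.univ_unique, Finset.sum_singleton]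
  rw [mul_add, mul_one]
  congr 1
  simp only [Finset.mul_sum]
  rw [Finset.sum_comm]
  exact Finset.sum_congr rfl fun i _ => Finset.sum_congr rfl fun j _ => by ring

lemma det_add_vecMulVec {n : ℕ} (M : Matrix (Fin n) (Fin n) ℝ) (u v : Fin n → ℝ) :
    (M + Matrix.vecMulVec u v).det = M.det + v ⬝ᵥ (M.adjugate *ᵥ u) := by
  set p : ℝ[X] := Matrix.det ((X : ℝ[X]) • (1 : Matrix (Fin n) (Fin n) ℝ[X]) + M.map C) with hp
  have hmonic : p.Monic := by
    rw [Polynomial.Monic.def, hp, Polynomial.leadingCoeff_det_X_one_add_C]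
  have heval : ∀ t : ℝ, p.eval t = (M + t • 1).det := by
    intro t
    rw [hp, ← coe_evalRingHom, RingHom.map_det, RingHom.mapMatrix_apply]
    congr 1
    ext i j
    by_cases h : i = j <;>
      simp [Matrix.map_apply, Matrix.one_apply, h, mul_comm, add_comm]
  have hfin : {t : ℝ | (M + t • 1).det = 0}.Finite := by
    have := Polynomial.finite_setOf_isRoot hmonic.ne_zero
    convert this using 1
    ext t
    simp [Polynomial.IsRoot, heval t]
  have hdense : Dense {t : ℝ | (M + t • 1).det ≠ 0} := by
    have := hfin.countable.dense_compl ℝ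
    convert this using 1
    rfl
  have hcM : Continuous fun t : ℝ => M + t • (1 : Matrix (Fin n) (Fin n) ℝ) :=
    continuous_const.add (continuous_id.smul continuous_const)
  have hc1 : Continuous fun t : ℝ => (M + t • 1 + Matrix.vecMulVec u v).det :=
    (hcM.add continuous_const).matrix_det
  have hc2 : Continuous fun t : ℝ =>
      (M + t • 1).det + v ⬝ᵥ ((M + t • 1).adjugate *ᵥ u) :=
    hcM.matrix_det.add (continuous_const.dotProduct
      (hcM.matrix_adjugate.matrix_mulVec continuous_const))
  have key : (fun t : ℝ => (M + t • 1 + Matrix.vecMulVec u v).det) =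
      fun t : ℝ => (M + t • 1).det + v ⬝ᵥ ((M + t • 1).adjugate *ᵥ u) := by
    refine hc1.ext_on hdense hc2 fun t ht => ?_
    exact det_add_vecMulVec_of_isUnit (isUnit_iff_ne_zero.mpr ht) u v
  have := congrFun key 0
  simpa using this

lemma gmdl_aux (n : ℕ) (H : Matrix (Fin n) (Fin n) ℝ) (u v : ℕ → Fin n → ℝ) (k : ℕ) :
    (H + ∑ j ∈ Finset.range k, Matrix.vecMulVec (u j) (v j)).det =
      H.det + ∑ i ∈ Finset.range k,
        v i ⬝ᵥ ((H + ∑ j ∈ Finset.range i, Matrix.vecMulVec (u j) (v j)).adjugate *ᵥ u i) := by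
  induction k with
  | zero => simp
  | succ k ih =>
    rw [Finset.sum_range_succ, ← add_assoc, det_add_vecMulVec, ih,
      Finset.sum_range_succ, add_assoc]

theorem generalized_matrix_determinant_lemma (n k : ℕ)
    (H : Matrix (Fin n) (Fin n) ℝ) (u v : Fin k → (Fin n → ℝ)) :
    (H + ∑ j : Fin k, Matrix.vecMulVec (u j) (v j)).det =
      H.det + ∑ i : Fin k, ∑ a, ∑ b,
        v i a *
          (H + ∑ j ∈ Finset.univ.filter (fun j : Fin k => (j : ℕ) < (i : ℕ)),
              Matrix.vecMulVec (u j) (v j)).adjugate a b *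
          u i b := by
  classical
  set u' : ℕ → Fin n → ℝ := fun j => if h : j < k then u ⟨j, h⟩ else 0 with hu'
  set v' : ℕ → Fin n → ℝ := fun j => if h : j < k then v ⟨j, h⟩ else 0 with hv'
  have hu'' : ∀ i : Fin k, u' (i : ℕ) = u i := fun i => by simp [hu', i.isLt]
  have hv'' : ∀ i : Fin k, v' (i : ℕ) = v i := fun i => by simp [hv', i.isLt]
  have h1 : ∑ j : Fin k, Matrix.vecMulVec (u j) (v j) =
      ∑ j ∈ Finset.range k, Matrix.vecMulVec (u' j) (v' j) := by
    rw [← Fin.sum_univ_eq_sum_range]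
    exact Finset.sum_congr rfl fun j _ => by rw [hu'' j, hv'' j]
  have h2 : ∀ i : Fin k,
      ∑ j ∈ Finset.univ.filter (fun j : Fin k => (j : ℕ) < (i : ℕ)),
        Matrix.vecMulVec (u j) (v j) =
      ∑ j ∈ Finset.range (i : ℕ), Matrix.vecMulVec (u' j) (v' j) := by
    intro i
    rw [Finset.sum_filter]
    have e1 : ∀ j : Fin k, (if (j : ℕ) < (i : ℕ) then Matrix.vecMulVec (u j) (v j) else 0) =
        (fun m => if m < (i : ℕ) then Matrix.vecMulVec (u' m) (v' m) else 0) (j : ℕ) := by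
      intro j; simp only [hu'' j, hv'' j]
    rw [Finset.sum_congr rfl fun j _ => e1 j,
      Fin.sum_univ_eq_sum_range (fun m => if m < (i : ℕ) then Matrix.vecMulVec (u' m) (v' m) else 0) k,
      ← Finset.sum_filter]
    congr 1
    ext m
    simp only [Finset.mem_filter, Finset.mem_range]
    constructor
    · rintro ⟨-, h⟩; exact h
    · intro h; exact ⟨lt_of_lt_of_le h (le_of_lt i.isLt), h⟩
  rw [h1, gmdl_aux]
  congr 1
  rw [← Fin.sum_univ_eq_sum_range (fun i => v' i ⬝ᵥ
    ((H + ∑ j ∈ Finset.range i, Matrix.vecMulVec (u' j) (v' j)).adjugate *ᵥ u' i)) k]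
  refine Finset.sum_congr rfl fun i _ => ?_
  rw [hu'' i, hv'' i, ← h2 i]
  simp [dotProduct, Matrix.mulVec, Finset.mul_sum, mul_assoc]
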